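/- Let λ₁, λ₂, λ₃ ∈ ℂ and set τ = (1−λ₂)(λ₁+λ₃) + (1+λ₂)(1+λ₁λ₃), U = (1+λ₂)(λ₁λ₃−1), V = (1−λ₂)(λ₁−λ₃), S = (1−λ₂)(λ₁+λ₃) − (1+λ₂)(1+λ₁λ₃), and T = τ·(U²−V²). Assume S ≠ 0 and T ≠ 0. Then there exist w ∈ ℂ with w² = S/T and τ·w ≠ i, and a nonzero complex number k, such that, setting σ₁ = −i(U+V)w, σ₃ = −i(U−V)w and σ₂ = (τw+i)/(τw−i), one has Z(λ₃)·X(λ₂)·Z(λ₁) = k · X(σ₃)·Z(σ₂)·X(σ₁). -/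

import Mathlib

/-- Generalized green phase `Z(a) = [[1,0],[0,a]]`. -/
def Zg (a : ℂ) : Matrix (Fin 2) (Fin 2) ℂ := !![1, 0; 0, a]

/-- Generalized red phase `X(a) = [[1+a,1−a],[1−a,1+a]]`. -/
def Xg (a : ℂ) : Matrix (Fin 2) (Fin 2) ℂ := !![1 + a, 1 - a; 1 - a, 1 + a]


set_option maxHeartbeats 1000000 in
private lemma XZX (a b c : ℂ) : Xg a * Zg b * Xg c =
    !![(1+a)*(1+c)+(1-a)*b*(1-c), (1+a)*(1-c)+(1-a)*b*(1+c);
       (1-a)*(1+c)+(1+a)*b*(1-c), (1-a)*(1-c)+(1+a)*b*(1+c)] := by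
  ext i j
  fin_cases i <;> fin_cases j <;>
    simp [Zg, Xg, Matrix.mul_apply, Fin.sum_univ_succ] <;> ring_nf

/-- General phases colour-swap law. -/
theorem general_phases_colour_swap (l₁ l₂ l₃ τ U V S T : ℂ)
    (hτ : τ = (1 - l₂) * (l₁ + l₃) + (1 + l₂) * (1 + l₁ * l₃))
    (hU : U = (1 + l₂) * (l₁ * l₃ - 1))
    (hV : V = (1 - l₂) * (l₁ - l₃))
    (hS : S = (1 - l₂) * (l₁ + l₃) - (1 + l₂) * (1 + l₁ * l₃))
    (hT : T = τ * (U ^ 2 - V ^ 2))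
    (hS0 : S ≠ 0) (hT0 : T ≠ 0) :
    ∃ w k : ℂ, w ^ 2 = S / T ∧ τ * w ≠ Complex.I ∧ k ≠ 0 ∧
      Zg l₃ * Xg l₂ * Zg l₁ =
        k • (Xg (-Complex.I * (U - V) * w) *
          Zg ((τ * w + Complex.I) / (τ * w - Complex.I)) *
          Xg (-Complex.I * (U + V) * w)) := by
  obtain ⟨w0, hw0⟩ := IsAlgClosed.exists_pow_nat_eq (k := ℂ) (S / T) zero_lt_two
  have hST : S / T ≠ 0 := div_ne_zero hS0 hT0
  have hw0ne : w0 ≠ 0 := by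
    intro h; rw [h] at hw0; simp at hw0; exact hST hw0.symm
  obtain ⟨w, hwsq, hwne, hwI⟩ : ∃ w : ℂ, w ^ 2 = S / T ∧ w ≠ 0 ∧ τ * w ≠ Complex.I := by
    by_cases h : τ * w0 = Complex.I
    · refine ⟨-w0, by rw [neg_pow]; simpa using hw0, neg_ne_zero.mpr hw0ne, ?_⟩
      intro h2
      rw [mul_neg, h, neg_eq_iff_eq_neg] at h2
      have h3 : (2 : ℂ) * Complex.I = 0 := by rw [two_mul]; linear_combination h2
      simp at h3
    · exact ⟨w0, hw0, hw0ne, h⟩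
  have hd : τ * w - Complex.I ≠ 0 := sub_ne_zero.mpr hwI
  refine ⟨w, (τ * w - Complex.I) / (8 * w), hwsq, hwI,
    div_ne_zero hd (by simpa using hwne), ?_⟩
  have hrel : τ * (U ^ 2 - V ^ 2) * w ^ 2 = S := by
    rw [hwsq, ← hT]; field_simp
  have hL : Zg l₃ * Xg l₂ * Zg l₁ =
      !![(τ - S - 2*U)/4, (τ + S + 2*V)/4; (τ + S - 2*V)/4, (τ - S + 2*U)/4] := by
    subst hτ hU hV hS
    ext i j
    fin_cases i <;> fin_cases j <;>
      simp [Zg, Xg, Matrix.mul_apply, Fin.sum_univ_succ] <;> ring_nf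
  rw [hL, XZX]
  clear hL hτ hU hV hS hT hS0 hT0 hST hwsq hw0 hw0ne
  have hI : Complex.I ^ 2 = -1 := Complex.I_sq
  ext i j
  fin_cases i <;> fin_cases j <;>
    [skip; skip; skip; skip] <;>
    simp only [Matrix.smul_apply, Matrix.cons_val', Matrix.cons_val_zero, Matrix.cons_val_one,
      Matrix.head_cons, Matrix.head_fin_const, Matrix.empty_val', Matrix.cons_val_fin_one,
      Matrix.of_apply, smul_eq_mul, Fin.isValue, Fin.zero_eta, Fin.mk_one] <;>
    field_simp
  · linear_combination (2 * w * (τ * w - Complex.I) + (-6)*w*Complex.I + 6*τ*w^2) * hrel +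
      (16*U*w*Complex.I + (-8)*τ*V^2*w^3*Complex.I + (-16)*τ*U*w^2 + 8*τ*U^2*w^3*Complex.I +
        8*τ^2*V^2*w^4 + (-8)*τ^2*U^2*w^4) * hI + (8*w + 8*w*Complex.I - 8*τ*w^2) * hrel + (16*τ*U*w^2 - 8*τ*(U^2-V^2)*w^3*(1+Complex.I) + 8*τ*τ*(U^2-V^2)*w^4 - 16*U*w*(1+Complex.I)) * hI
  · linear_combination (2 * w * (τ * w - Complex.I) + 10*w*Complex.I + (-10)*τ*w^2) * hrel +
      ((-16)*V*w*Complex.I + 16*τ*V*w^2 + 8*τ*V^2*w^3*Complex.I + (-8)*τ*U^2*w^3*Complex.I +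
        (-8)*τ^2*V^2*w^4 + 8*τ^2*U^2*w^4) * hI + (8*τ*w^2 - 8*w - 8*w*Complex.I) * hrel + (-16*τ*V*w^2 + 8*τ*(U^2-V^2)*w^3*(1+Complex.I) - 8*τ*τ*(U^2-V^2)*w^4 + 16*V*w*(1+Complex.I)) * hI
  · linear_combination (2 * w * (τ * w - Complex.I) + 10*w*Complex.I + (-10)*τ*w^2) * hrel +
      (16*V*w*Complex.I + (-16)*τ*V*w^2 + 8*τ*V^2*w^3*Complex.I + (-8)*τ*U^2*w^3*Complex.I +
        (-8)*τ^2*V^2*w^4 + 8*τ^2*U^2*w^4) * hI + (8*τ*w^2 - 8*w - 8*w*Complex.I) * hrel + (16*τ*V*w^2 + 8*τ*(U^2-V^2)*w^3*(1+Complex.I) - 8*τ*τ*(U^2-V^2)*w^4 - 16*V*w*(1+Complex.I)) * hI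
  · linear_combination (2 * w * (τ * w - Complex.I) + (-6)*w*Complex.I + 6*τ*w^2) * hrel +
      ((-16)*U*w*Complex.I + (-8)*τ*V^2*w^3*Complex.I + 16*τ*U*w^2 + 8*τ*U^2*w^3*Complex.I +
        8*τ^2*V^2*w^4 + (-8)*τ^2*U^2*w^4) * hI + (8*w + 8*w*Complex.I - 8*τ*w^2) * hrel + (-16*τ*U*w^2 - 8*τ*(U^2-V^2)*w^3*(1+Complex.I) + 8*τ*τ*(U^2-V^2)*w^4 + 16*U*w*(1+Complex.I)) * hI
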